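/- For every finite-dimensional representation (U, ρ) of the Lie algebra 𝓛 there exists an integer P such that ρ(𝓛_p) = 0 for all p ≥ P. -/

import Mathlib

open scoped BigOperators

noncomputable section

/-- The index `2i-1` (1-based), i.e. `2i` (0-based). -/
def p1 {d z : ℕ} (h : 2*z ≤ d) (i : Fin z) : Fin d := ⟨2*(i:ℕ), by have := i.2; omega⟩

/-- The index `2i` (1-based), i.e. `2i+1` (0-based). -/
def p2 {d z : ℕ} (h : 2*z ≤ d) (i : Fin z) : Fin d := ⟨2*(i:ℕ)+1, by have := i.2; omega⟩

/-- `σ(m,n) = ∏_i q_i^{n_{2i} m_{2i-1}}`. -/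
def qsigma {d z : ℕ} (h : 2*z ≤ d) (q : Fin z → ℂ) (m n : Fin d → ℤ) : ℂ :=
  ∏ i : Fin z, q i ^ (n (p2 h i) * m (p1 h i))

/-- The subgroup `R = ⊕ (ℤ k_i e_{2i-1} ⊕ ℤ k_i e_{2i}) ⊕ ⊕_{l > 2z} ℤ e_l` of `ℤ^d`. -/
def Rgrp {d z : ℕ} (h : 2*z ≤ d) (k : Fin z → ℕ) : AddSubgroup (Fin d → ℤ) where
  carrier := {m | ∀ i : Fin z, ((k i : ℤ) ∣ m (p1 h i)) ∧ ((k i : ℤ) ∣ m (p2 h i))}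
  zero_mem' := fun i => ⟨dvd_zero _, dvd_zero _⟩
  add_mem' := fun ha hb i => ⟨dvd_add (ha i).1 (hb i).1, dvd_add (ha i).2 (hb i).2⟩
  neg_mem' := fun ha i => ⟨dvd_neg.mpr (ha i).1, dvd_neg.mpr (ha i).2⟩

/-- Membership in the set `Γ₀` of distinguished coset representatives for `ℤ^d/R`. -/
def inGamma0 {d z : ℕ} (h : 2*z ≤ d) (k : Fin z → ℕ) (n : Fin d → ℤ) : Prop :=
  (∀ i : Fin z, 0 ≤ n (p1 h i) ∧ n (p1 h i) < k i ∧ 0 ≤ n (p2 h i) ∧ n (p2 h i) < k i) ∧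
  ∀ l : Fin d, 2*z ≤ (l:ℕ) → n l = 0

/-- The representative in `Γ₀` of the coset `n + R`. -/
def repZ {d z : ℕ} (h : 2*z ≤ d) (k : Fin z → ℕ) (n : Fin d → ℤ) : Fin d → ℤ :=
  fun l => if hl : (l:ℕ) < 2*z then n l % (k ⟨(l:ℕ)/2, by omega⟩ : ℤ) else 0

/-- `(γ|m) = ∑ γ_i m_i`. -/
def ginner {d : ℕ} (γ : Fin d → ℂ) (m : Fin d → ℤ) : ℂ := ∑ i, γ i * (m i : ℂ)

/-- The matrix `X^n = ⊗_i X_{2i-1}^{n_{2i-1}} X_{2i}^{n_{2i}} ∈ gl_N`, realized on the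
index set `∏_i Fin (k_i)` (of cardinality `N = k_1 ⋯ k_z`). -/
def Xmat {d z : ℕ} (h : 2*z ≤ d) (k : Fin z → ℕ) (q : Fin z → ℂ) (n : Fin d → ℤ) :
    Matrix ((i : Fin z) → Fin (k i)) ((i : Fin z) → Fin (k i)) ℂ :=
  Matrix.of fun j l => ∏ i : Fin z,
    (q i ^ (n (p1 h i) * (j i : ℤ)) *
      (if (l i : ℤ) = ((j i : ℤ) + n (p2 h i)) % (k i) then 1 else 0))

lemma repZ_mem {d z : ℕ} (h : 2*z ≤ d) (k : Fin z → ℕ) (hk : ∀ i, 0 < k i)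
    (n : Fin d → ℤ) : inGamma0 h k (repZ h k n) := by
  constructor
  · intro i
    have h1 : ((p1 h i : ℕ)) < 2*z := by simp only [p1]; have := i.2; omega
    have h2 : ((p2 h i : ℕ)) < 2*z := by simp only [p2]; have := i.2; omega
    have e1 : (⟨((p1 h i : ℕ))/2, by omega⟩ : Fin z) = i := by
      apply Fin.ext; simp only [p1]; omega
    have e2 : (⟨((p2 h i : ℕ))/2, by omega⟩ : Fin z) = i := by
      apply Fin.ext; simp only [p2]; omega
    have hk' : (0:ℤ) < (k i : ℤ) := by exact_mod_cast hk i
    refine ⟨?_, ?_, ?_, ?_⟩ <;> simp only [repZ, dif_pos h1, dif_pos h2, e1, e2]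
    · exact Int.emod_nonneg _ (by exact_mod_cast (hk i).ne')
    · exact Int.emod_lt_of_pos _ hk'
    · exact Int.emod_nonneg _ (by exact_mod_cast (hk i).ne')
    · exact Int.emod_lt_of_pos _ hk'
  · intro l hl
    simp only [repZ, dif_neg (by omega : ¬ (l:ℕ) < 2*z)]

/-- A family of operators is a weight module with uniformly bounded finite-dimensional
weight spaces (cuspidality), with respect to the Cartan operator `L0`. -/
def IsCuspidalFor {M : Type*} [AddCommGroup M] [Module ℂ M] (L0 : Module.End ℂ M) : Prop :=
  ((⨆ c : ℂ, Module.End.eigenspace L0 c) = ⊤) ∧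
  (∀ c : ℂ, FiniteDimensional ℂ (Module.End.eigenspace L0 c)) ∧
  ∃ B : ℕ, ∀ c : ℂ, Module.finrank ℂ (Module.End.eigenspace L0 c) ≤ B

/-- The defining bracket relations of the solenoidal Lie algebra `g` over the rational
quantum torus, for a family of operators `L` (i.e. `M` is a `g`-module). -/
def GRel {d z : ℕ} (h : 2*z ≤ d) (k : Fin z → ℕ) (q : Fin z → ℂ) (γ : Fin d → ℂ)
    {M : Type*} [AddCommGroup M] [Module ℂ M] (L : (Fin d → ℤ) → Module.End ℂ M) : Prop :=
  (∀ m n, m ∈ Rgrp h k → n ∈ Rgrp h k → ⁅L m, L n⁆ = (ginner γ (n - m)) • L (m + n)) ∧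
  (∀ m s, m ∈ Rgrp h k → s ∉ Rgrp h k → ⁅L m, L s⁆ = (ginner γ s) • L (m + s)) ∧
  (∀ r s, r ∉ Rgrp h k → s ∉ Rgrp h k →
    ⁅L r, L s⁆ = (qsigma h q r s - qsigma h q s r) • L (r + s))

/-- The relations making `(L, T)` a `Zg`-module structure: `Z` acts associatively and the
semidirect-product brackets `[L_m, t^n] = (γ|n) t^{m+n}`, `[L_r, t^n] = 0` hold. -/
def ZRel {d z : ℕ} (h : 2*z ≤ d) (k : Fin z → ℕ) (γ : Fin d → ℂ)
    {M : Type*} [AddCommGroup M] [Module ℂ M] (L T : (Fin d → ℤ) → Module.End ℂ M) : Prop :=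
  (∀ m n, m ∈ Rgrp h k → n ∈ Rgrp h k → T m * T n = T (m + n)) ∧
  (T 0 = 1) ∧
  (∀ m n, m ∈ Rgrp h k → n ∈ Rgrp h k → ⁅L m, T n⁆ = (ginner γ n) • T (m + n)) ∧
  (∀ r n, r ∉ Rgrp h k → n ∈ Rgrp h k → ⁅L r, T n⁆ = 0)

/-- `subE v i = v - e_i` (with truncated subtraction in `ℕ^d`). -/
def subE {d : ℕ} (v : Fin d → ℕ) (i : Fin d) : Fin d → ℕ :=
  Function.update v i (v i - 1)

lemma subE_ne {d : ℕ} {m n : Fin d → ℕ} (hm : m ≠ 0) (hn : n ≠ 0) (i : Fin d) :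
    subE (m + n) i ≠ 0 := by
  intro h
  obtain ⟨j, hj⟩ : ∃ j, m j ≠ 0 := by
    by_contra hc; push_neg at hc; exact hm (funext fun j => hc j)
  obtain ⟨j', hj'⟩ : ∃ j', n j' ≠ 0 := by
    by_contra hc; push_neg at hc; exact hn (funext fun j => hc j)
  by_cases hji : j = i
  · by_cases hj'i : j' = i
    · rw [hji] at hj; rw [hj'i] at hj'
      have := congrFun h i
      simp only [subE, Function.update_self, Pi.add_apply, Pi.zero_apply] at this
      omega
    · have := congrFun h j'
      simp only [subE, Function.update_of_ne hj'i, Pi.add_apply, Pi.zero_apply] at this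
      omega
  · have := congrFun h j
    simp only [subE, Function.update_of_ne hji, Pi.add_apply, Pi.zero_apply] at this
    omega

/-- The index `e_i ∈ ℕ^d ∖ {0}`. -/
def eIdx {d : ℕ} (i : Fin d) : {m : Fin d → ℕ // m ≠ 0} :=
  ⟨fun j => if j = i then 1 else 0, by
    intro h
    have := congrFun h i
    simp at this⟩

/-- The defining bracket relations of the Lie algebra `𝓛^x`, spanned by the basis
`{x^m d_γ : m ∈ ℕ^d, m ≠ 0}` with `[x^m d_γ, x^n d_γ] = ∑ γ_i (n_i - m_i) x^{m+n-e_i} d_γ`. -/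
def LxRel {d : ℕ} (γ : Fin d → ℂ) {Lx : Type*} [LieRing Lx] [LieAlgebra ℂ Lx]
    (b : Module.Basis {m : Fin d → ℕ // m ≠ 0} ℂ Lx) : Prop :=
  ∀ m n : {m : Fin d → ℕ // m ≠ 0},
    ⁅b m, b n⁆ = ∑ i : Fin d,
      (γ i * ((n.1 i : ℂ) - (m.1 i : ℂ))) • b ⟨subE (m.1 + n.1) i, subE_ne m.2 n.2 i⟩

/-- Defining bracket relations of the Lie algebra `𝓛` on its basis
`{x^m d_γ : m ∈ ℕ^d, m ≠ 0} ∪ {x^n t̄^s̄ : n ∈ ℕ^d, s̄ ∈ Γ}` (the group `Γ = ℤ^d/R` being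
identified with its set `Γ₀` of distinguished representatives). -/
def LLRel {d z : ℕ} (h : 2*z ≤ d) (k : Fin z → ℕ) (hk : ∀ i, 0 < k i)
    (q : Fin z → ℂ) (γ : Fin d → ℂ)
    {LL : Type*} [LieRing LL] [LieAlgebra ℂ LL]
    (b : Module.Basis ({m : Fin d → ℕ // m ≠ 0} ⊕
      ((Fin d → ℕ) × {s : Fin d → ℤ // inGamma0 h k s})) ℂ LL) : Prop :=
  (∀ m n : {m : Fin d → ℕ // m ≠ 0},
    ⁅b (Sum.inl m), b (Sum.inl n)⁆ = ∑ i : Fin d,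
      (γ i * ((n.1 i : ℂ) - (m.1 i : ℂ))) •
        b (Sum.inl ⟨subE (m.1 + n.1) i, subE_ne m.2 n.2 i⟩)) ∧
  (∀ (m : {m : Fin d → ℕ // m ≠ 0}) (l : Fin d → ℕ)
      (s : {s : Fin d → ℤ // inGamma0 h k s}),
    ⁅b (Sum.inl m), b (Sum.inr (l, s))⁆ =
      (∑ i : Fin d, (γ i * (l i : ℂ)) • b (Sum.inr (subE (m.1 + l) i, s))) +
        (ginner γ s.1) • b (Sum.inr (m.1 + l, s))) ∧
  (∀ (p l : Fin d → ℕ) (r s : {s : Fin d → ℤ // inGamma0 h k s}),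
    ⁅b (Sum.inr (p, r)), b (Sum.inr (l, s))⁆ =
      (qsigma h q r.1 s.1 - qsigma h q s.1 r.1) •
        b (Sum.inr (p + l, ⟨repZ h k (r.1 + s.1), repZ_mem h k hk _⟩)))

/-- The matrix `e_i γ^T ∈ gl_d(ℂ)`: the `d × d` matrix whose `i`-th row is `γ` and whose
other rows vanish. -/
def rowMat {d : ℕ} (γ : Fin d → ℂ) (i : Fin d) : Matrix (Fin d) (Fin d) ℂ :=
  Matrix.of fun a b => if a = i then γ b else 0

attribute [local instance 100] LieRing.ofAssociativeRing


lemma ginner_ne_zero' {d : ℕ} {γ : Fin d → ℂ} (hγ : LinearIndependent ℚ γ)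
    {s : Fin d → ℤ} (hs : s ≠ 0) : ginner γ s ≠ 0 := by
  intro h
  apply hs
  have h2 : ∑ i, (fun i => (s i : ℚ)) i • γ i = 0 := by
    rw [← h]
    simp only [ginner, Rat.smul_def]
    refine Finset.sum_congr rfl fun i _ => ?_
    push_cast
    ring
  have h3 := Fintype.linearIndependent_iff.mp hγ (fun i => (s i : ℚ)) h2
  funext i
  simpa using h3 i

/-- Pure power exponent `(n+1) e_i`. -/
def peIdx {d : ℕ} (i : Fin d) (n : ℕ) : {m : Fin d → ℕ // m ≠ 0} :=
  ⟨fun j => if j = i then n + 1 else 0, by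
    intro hc; have := congrFun hc i; simp at this⟩

/-- Theorem 4.1(4).  Every finite-dimensional representation `(U, ρ)` of
the Lie algebra `𝓛` satisfies `ρ(𝓛_p) = 0` for all sufficiently large `p`; recall that
`𝓛_p = span{x^m d_γ : |m| = p+1} ⊕ span{x^n t̄^s̄ : |n| = p, s̄ ∈ Γ}`. -/
theorem stmt6 (d z : ℕ) (hd : 0 < d) (hz : 0 < z) (h2z : 2*z ≤ d)
    (k : Fin z → ℕ) (hk : ∀ i, 0 < k i)
    (q : Fin z → ℂ) (hq : ∀ i, IsPrimitiveRoot (q i) (k i))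
    (hkdvd : ∀ (i : ℕ) (hi : i + 1 < z), k ⟨i+1, hi⟩ ∣ k ⟨i, by omega⟩)
    (γ : Fin d → ℂ) (hγ : LinearIndependent ℚ γ)
    (LL : Type*) [LieRing LL] [LieAlgebra ℂ LL]
    (b : Module.Basis ({m : Fin d → ℕ // m ≠ 0} ⊕
      ((Fin d → ℕ) × {s : Fin d → ℤ // inGamma0 h2z k s})) ℂ LL)
    (hb : LLRel h2z k hk q γ b)
    (U : Type*) [AddCommGroup U] [Module ℂ U] [FiniteDimensional ℂ U]
    (ρ : LL →ₗ⁅ℂ⁆ Module.End ℂ U) :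
    ∃ P : ℕ, ∀ p : ℕ, P ≤ p →
      (∀ m : {m : Fin d → ℕ // m ≠ 0}, (∑ l, m.1 l) = p + 1 → ρ (b (Sum.inl m)) = 0) ∧
      (∀ (n : Fin d → ℕ) (s : {s : Fin d → ℤ // inGamma0 h2z k s}),
        (∑ l, n l) = p → ρ (b (Sum.inr (n, s))) = 0) := by
  
  classical
  obtain ⟨hb1, hb2, hb3⟩ := hb
  have hγne : ∀ i, γ i ≠ 0 := fun i => hγ.ne_zero i
  -- Step 1: pure powers are ad-eigenvectors
  have key1 : ∀ (i : Fin d) (n : ℕ),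
      ⁅b (Sum.inl (peIdx i 0)), b (Sum.inl (peIdx i n))⁆
        = (γ i * n) • b (Sum.inl (peIdx i n)) := by
    intro i n
    rw [hb1]
    rw [Finset.sum_eq_single i]
    · have hidx : (⟨subE ((peIdx i 0).1 + (peIdx i n).1) i,
          subE_ne (peIdx i 0).2 (peIdx i n).2 i⟩ : {m : Fin d → ℕ // m ≠ 0})
          = peIdx i n := by
        apply Subtype.ext
        funext j
        by_cases hj : j = i
        · subst hj; simp [subE, peIdx, Function.update_self]
        · simp [subE, peIdx, Function.update_of_ne hj, hj]
      rw [hidx]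
      congr 1
      show γ i * (((peIdx i n).1 i : ℂ) - ((peIdx i 0).1 i : ℂ)) = γ i * n
      simp only [peIdx, if_pos rfl]
      push_cast
      ring
    · intro j _ hj
      simp [peIdx, hj]
    · intro hi; exact absurd (Finset.mem_univ i) hi
  set T : Fin d → Module.End ℂ (Module.End ℂ U) :=
    fun i => (LieAlgebra.ad ℂ (Module.End ℂ U)) (ρ (b (Sum.inl (peIdx i 0)))) with hT
  have heig : ∀ (i : Fin d) (n : ℕ),
      (T i) (ρ (b (Sum.inl (peIdx i n)))) = (γ i * n) • ρ (b (Sum.inl (peIdx i n))) := by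
    intro i n
    rw [hT]
    simp only [LieAlgebra.ad_apply]
    rw [← ρ.map_lie, key1]
    exact ρ.toLinearMap.map_smul _ _
  have hfin : ∀ i : Fin d, Set.Finite {n : ℕ | ρ (b (Sum.inl (peIdx i n))) ≠ 0} := by
    intro i
    have hone : Function.Injective (fun n : ℕ => γ i * (n : ℂ)) := by
      intro a b hab
      simp only at hab
      have := mul_left_cancel₀ (hγne i) hab
      exact_mod_cast this
    refine Set.Finite.subset ((Module.End.finite_hasEigenvalue (T i)).preimage hone.injOn) ?_
    intro n hn
    exact Module.End.hasEigenvalue_of_hasEigenvector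
      ⟨Module.End.mem_eigenspace_iff.mpr (heig i n), hn⟩
  set N₀ : ℕ := Finset.univ.sup (fun i : Fin d => (hfin i).toFinset.sup id) + 1 with hN₀
  have hvanish : ∀ (i : Fin d) (n : ℕ), N₀ ≤ n → ρ (b (Sum.inl (peIdx i n))) = 0 := by
    intro i n hn
    by_contra hne
    have h1 : n ∈ (hfin i).toFinset := (hfin i).mem_toFinset.mpr hne
    have h2 : n ≤ (hfin i).toFinset.sup id := Finset.le_sup (f := id) h1
    have h3 : (hfin i).toFinset.sup id
        ≤ Finset.univ.sup (fun i : Fin d => (hfin i).toFinset.sup id) :=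
      Finset.le_sup (f := fun i : Fin d => (hfin i).toFinset.sup id) (Finset.mem_univ i)
    omega
  -- auxiliary nonvanishing of sums
  have hadd_ne : ∀ (m : {m : Fin d → ℕ // m ≠ 0}) (x : Fin d → ℕ), m.1 + x ≠ 0 := by
    intro m x hc
    apply m.2
    funext j
    have := congrFun hc j
    simp only [Pi.add_apply, Pi.zero_apply] at this ⊢
    omega
  have hne2 : ∀ (i : Fin d) (N : ℕ) (m : {m : Fin d → ℕ // m ≠ 0}),
      ((peIdx i N).1 + m.1) ≠ 0 := by
    intro i N m hc
    apply m.2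
    funext j
    have := congrFun hc j
    simp only [Pi.add_apply, Pi.zero_apply] at this ⊢
    omega
  -- Step 2: all exponents with a coordinate ≥ N₀ + 2 vanish
  have key2 : ∀ (i : Fin d) (m : {m : Fin d → ℕ // m ≠ 0}),
      ρ (b (Sum.inl ⟨(peIdx i N₀).1 + m.1, hne2 i N₀ m⟩)) = 0 := by
    intro i m
    have hm' : (m.1 + (peIdx i 0).1) ≠ 0 := hadd_ne m _
    set m' : {m : Fin d → ℕ // m ≠ 0} := ⟨m.1 + (peIdx i 0).1, hm'⟩
    have hB : ((peIdx i N₀).1 + m'.1) = ((peIdx i (N₀+1)).1 + m.1) := by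
      funext j
      by_cases hj : j = i <;> simp [peIdx, m', hj] <;> omega
    have u : Fin d → Module.End ℂ U := fun j =>
      ρ (b (Sum.inl ⟨subE ((peIdx i (N₀+1)).1 + m.1) j,
        subE_ne (peIdx i (N₀+1)).2 m.2 j⟩))
    have hvec : ∀ j, ρ (b (Sum.inl (⟨subE ((peIdx i N₀).1 + m'.1) j,
        subE_ne (peIdx i N₀).2 m'.2 j⟩ : {m : Fin d → ℕ // m ≠ 0})))
        = ρ (b (Sum.inl ⟨subE ((peIdx i (N₀+1)).1 + m.1) j,
        subE_ne (peIdx i (N₀+1)).2 m.2 j⟩)) := by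
      intro j
      refine congrArg ρ (congrArg b (congrArg Sum.inl (Subtype.ext ?_)))
      show subE ((peIdx i N₀).1 + m'.1) j = subE ((peIdx i (N₀+1)).1 + m.1) j
      rw [hB]
    have e1 := congrArg ρ (hb1 (peIdx i N₀) m')
    have e2 := congrArg ρ (hb1 (peIdx i (N₀+1)) m)
    rw [ρ.map_lie, hvanish i N₀ le_rfl, zero_lie] at e1
    rw [ρ.map_lie, hvanish i (N₀+1) (by omega), zero_lie] at e2
    rw [← LieHom.coe_toLinearMap ρ] at e1 e2
    simp only [map_sum, map_smul, LieHom.coe_toLinearMap] at e1 e2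
    simp only [hvec] at e1
    have e3 : ∑ j, ((γ j * ((m'.1 j : ℂ) - ((peIdx i N₀).1 j : ℂ)))
        - (γ j * ((m.1 j : ℂ) - ((peIdx i (N₀+1)).1 j : ℂ))))
        • ρ (b (Sum.inl ⟨subE ((peIdx i (N₀+1)).1 + m.1) j,
            subE_ne (peIdx i (N₀+1)).2 m.2 j⟩)) = 0 := by
      simp only [sub_smul, Finset.sum_sub_distrib]
      rw [← e1, ← e2, sub_zero]
    rw [Finset.sum_eq_single i] at e3
    · have hcoef : ((γ i * ((m'.1 i : ℂ) - ((peIdx i N₀).1 i : ℂ)))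
          - (γ i * ((m.1 i : ℂ) - ((peIdx i (N₀+1)).1 i : ℂ)))) = 2 * γ i := by
        simp only [m', peIdx, Pi.add_apply, if_pos rfl]
        push_cast
        ring
      rw [hcoef] at e3
      have hui : ρ (b (Sum.inl (⟨subE ((peIdx i (N₀+1)).1 + m.1) i,
            subE_ne (peIdx i (N₀+1)).2 m.2 i⟩ : {m : Fin d → ℕ // m ≠ 0})))
          = ρ (b (Sum.inl ⟨(peIdx i N₀).1 + m.1, hne2 i N₀ m⟩)) := by
        refine congrArg ρ (congrArg b (congrArg Sum.inl (Subtype.ext ?_)))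
        show subE ((peIdx i (N₀+1)).1 + m.1) i = (peIdx i N₀).1 + m.1
        funext j
        by_cases hj : j = i
        · subst hj; simp [subE, peIdx, Function.update_self]
        · simp [subE, peIdx, Function.update_of_ne hj, hj]
      rw [hui] at e3
      have h2γ : (2 : ℂ) * γ i ≠ 0 := mul_ne_zero two_ne_zero (hγne i)
      exact (smul_eq_zero.mp e3).resolve_left h2γ
    · intro j _ hj
      have h1 : (m'.1 j : ℂ) = (m.1 j : ℂ) := by simp [m', peIdx, hj]
      have h2 : ((peIdx i N₀).1 j : ℂ) = 0 := by simp [peIdx, hj]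
      have h3 : ((peIdx i (N₀+1)).1 j : ℂ) = 0 := by simp [peIdx, hj]
      rw [h1, h2, h3, sub_self, zero_smul]
    · intro hi; exact absurd (Finset.mem_univ i) hi
  -- vanishing for x-part with one big coordinate
  have hinl : ∀ (v : {m : Fin d → ℕ // m ≠ 0}) (i : Fin d), N₀ + 2 ≤ v.1 i →
      ρ (b (Sum.inl v)) = 0 := by
    intro v i hvi
    have hm : (Function.update v.1 i (v.1 i - (N₀+1))) ≠ (0 : Fin d → ℕ) := by
      intro hc
      have h5 := congrFun hc i
      simp only [Function.update_self, Pi.zero_apply] at h5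
      omega
    have hv : v = ⟨(peIdx i N₀).1
        + Function.update v.1 i (v.1 i - (N₀+1)), hne2 i N₀ ⟨_, hm⟩⟩ := by
      apply Subtype.ext
      funext j
      by_cases hj : j = i
      · subst hj
        simp [peIdx]
        omega
      · simp [peIdx, Function.update_of_ne hj, hj]
    rw [hv]
    exact key2 i ⟨_, hm⟩
  -- vanishing for the torus part
  have hinr : ∀ (n : Fin d → ℕ) (s : {s : Fin d → ℤ // inGamma0 h2z k s}) (i : Fin d),
      N₀ + 2 ≤ n i → ρ (b (Sum.inr (n, s))) = 0 := by
    intro n s i hni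
    have hn0 : n ≠ 0 := by
      intro hc; have := congrFun hc i; simp only [Pi.zero_apply] at this; omega
    have hρm : ρ (b (Sum.inl ⟨n, hn0⟩)) = 0 := hinl ⟨n, hn0⟩ i hni
    by_cases hs : s.1 = 0
    · have e4 := congrArg ρ (hb2 ⟨n, hn0⟩ (fun j => if j = i then 1 else 0) s)
      rw [ρ.map_lie, hρm, zero_lie, ← LieHom.coe_toLinearMap ρ] at e4
      simp only [map_add, map_sum, map_smul, LieHom.coe_toLinearMap] at e4
      have hg0 : ginner γ s.1 = 0 := by simp [ginner, hs]
      rw [hg0, zero_smul, add_zero, Finset.sum_eq_single i] at e4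
      · have hsub : subE ((⟨n, hn0⟩ : {m : Fin d → ℕ // m ≠ 0}).1
            + fun j => if j = i then 1 else 0) i = n := by
          funext j
          by_cases hj : j = i
          · subst hj; simp [subE, Function.update_self]
          · simp [subE, Function.update_of_ne hj, hj]
        rw [hsub] at e4
        have hco : γ i * (((fun j => if j = i then 1 else 0) i : ℕ) : ℂ) ≠ 0 := by
          simp [hγne i]
        exact ((smul_eq_zero.mp e4.symm).resolve_left hco)
      · intro j _ hj
        simp [hj]
      · intro hi; exact absurd (Finset.mem_univ i) hi
    · have e4 := congrArg ρ (hb2 ⟨n, hn0⟩ 0 s)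
      rw [ρ.map_lie, hρm, zero_lie, ← LieHom.coe_toLinearMap ρ] at e4
      simp only [map_add, map_sum, map_smul, LieHom.coe_toLinearMap, Pi.zero_apply,
        Nat.cast_zero, mul_zero, zero_smul, Finset.sum_const_zero, zero_add, add_zero] at e4
      exact ((smul_eq_zero.mp e4.symm).resolve_left (ginner_ne_zero' hγ hs))
  -- final assembly
  refine ⟨d * (N₀ + 2), fun p hp => ⟨?_, ?_⟩⟩
  · intro m hm
    have hex : ∃ i, N₀ + 2 ≤ m.1 i := by
      by_contra hc
      push_neg at hc
      have hle : ∑ l, m.1 l ≤ ∑ _l : Fin d, (N₀ + 1) :=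
        Finset.sum_le_sum (fun l _ => by have := hc l; omega)
      simp only [Finset.sum_const, Finset.card_univ, Fintype.card_fin, smul_eq_mul] at hle
      have h1 : d * (N₀ + 2) = d * (N₀ + 1) + d := by ring
      rw [h1] at hp
      rw [hm] at hle
      omega
    obtain ⟨i, hi⟩ := hex
    exact hinl m i hi
  · intro n s hn
    have hex : ∃ i, N₀ + 2 ≤ n i := by
      by_contra hc
      push_neg at hc
      have hle : ∑ l, n l ≤ ∑ _l : Fin d, (N₀ + 1) :=
        Finset.sum_le_sum (fun l _ => by have := hc l; omega)
      simp only [Finset.sum_const, Finset.card_univ, Fintype.card_fin, smul_eq_mul] at hle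
      have h1 : d * (N₀ + 2) = d * (N₀ + 1) + d := by ring
      rw [h1] at hp
      rw [hn] at hle
      omega
    obtain ⟨i, hi⟩ := hex
    exact hinr n s i hi
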